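/- Let r, κ > 0, m_∞ ≥ 0 with m_∞ < r, and let ρ : [0,∞) → ℝ be a C¹ function satisfying ε ρ'(t) = (r - κ ρ(t)) ρ(t) - M(t) for some ε > 0, where 0 ≤ M(t) ≤ m_∞ ρ(t) for all t. If (r - m_∞)/κ ≤ ρ(0) ≤ r/κ, then for all t ≥ 0, (r - m_∞)/κ ≤ ρ(t) ≤ r/κ. -/

import Mathlib

open Real Set

/-- If `f` has negative derivative at `a`, then `f < f a` just to the right of `a`. -/
lemma evRight_lt {f : ℝ → ℝ} {a d : ℝ} (hf : HasDerivAt f d a) (hd : d < 0) :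
    ∀ᶠ s in nhdsWithin a (Ioi a), f s < f a := by
  have h := hasDerivAt_iff_tendsto_slope.mp hf
  have h2 : ∀ᶠ s in nhdsWithin a {a}ᶜ, slope f a s < 0 := h.eventually (gt_mem_nhds hd)
  have h3 : nhdsWithin a (Ioi a) ≤ nhdsWithin a {a}ᶜ :=
    nhdsWithin_mono a fun x hx => mem_compl_singleton_iff.mpr (ne_of_gt hx)
  filter_upwards [h2.filter_mono h3, self_mem_nhdsWithin] with s hs hs'
  have h4 : (0:ℝ) < s - a := sub_pos.mpr hs'
  rw [slope_def_field] at hs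
  rcases div_neg_iff.mp hs with ⟨h5, h6⟩ | ⟨h5, h6⟩
  · linarith
  · linarith

lemma evRight_gt {f : ℝ → ℝ} {a d : ℝ} (hf : HasDerivAt f d a) (hd : 0 < d) :
    ∀ᶠ s in nhdsWithin a (Ioi a), f a < f s := by
  have h := hasDerivAt_iff_tendsto_slope.mp hf
  have h2 : ∀ᶠ s in nhdsWithin a {a}ᶜ, 0 < slope f a s := h.eventually (lt_mem_nhds hd)
  have h3 : nhdsWithin a (Ioi a) ≤ nhdsWithin a {a}ᶜ :=
    nhdsWithin_mono a fun x hx => mem_compl_singleton_iff.mpr (ne_of_gt hx)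
  filter_upwards [h2.filter_mono h3, self_mem_nhdsWithin] with s hs hs'
  have h4 : (0:ℝ) < s - a := sub_pos.mpr hs'
  rw [slope_def_field] at hs
  rcases div_pos_iff.mp hs with ⟨h5, h6⟩ | ⟨h5, h6⟩
  · linarith
  · linarith

/-- A priori bounds on the total population size ρ_ε. -/
theorem stmt_0 (r κ m_inf ε : ℝ) (hr : 0 < r) (hκ : 0 < κ) (hm0 : 0 ≤ m_inf)
    (hmr : m_inf < r) (hε : 0 < ε) (ρ M : ℝ → ℝ)
    (hρC1 : ContDiff ℝ 1 ρ)
    (hode : ∀ t ≥ (0:ℝ), ε * deriv ρ t = (r - κ * ρ t) * ρ t - M t)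
    (hM : ∀ t ≥ (0:ℝ), 0 ≤ M t ∧ M t ≤ m_inf * ρ t)
    (h0 : (r - m_inf) / κ ≤ ρ 0 ∧ ρ 0 ≤ r / κ) :
    ∀ t ≥ (0:ℝ), (r - m_inf) / κ ≤ ρ t ∧ ρ t ≤ r / κ := by
  have hc : Continuous ρ := hρC1.continuous
  have hdiff : ∀ t, HasDerivAt ρ (deriv ρ t) t := fun t =>
    ((hρC1.differentiable one_ne_zero) t).hasDerivAt
  set ρm := (r - m_inf) / κ with hρm
  set ρp := r / κ with hρp
  have hρm_pos : 0 < ρm := div_pos (by linarith) hκ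
  have hρmp : ρm ≤ ρp := by
    rw [hρm, hρp, div_le_div_iff₀ hκ hκ]; nlinarith
  have key : ∀ δ, 0 < δ → δ < ρm → ∀ t, 0 ≤ t → ρ t ∈ Icc (ρm - δ) (ρp + δ) := by
    intro δ hδ0 hδρ
    by_contra hcon
    push_neg at hcon
    obtain ⟨t₁, ht₁0, ht₁⟩ := hcon
    set lo := ρm - δ with hlo
    set hi := ρp + δ with hhi
    have hlohi : lo < hi := by rw [hlo, hhi]; linarith
    set S : Set ℝ := {t | t ∈ Icc 0 t₁ ∧ ρ t ∉ Icc lo hi} with hS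
    have hne : t₁ ∈ S := ⟨⟨ht₁0, le_rfl⟩, ht₁⟩
    have hbdd : BddBelow S := ⟨0, fun s hs => hs.1.1⟩
    set t₀ := sInf S with ht₀
    have ht₀0 : 0 ≤ t₀ := le_csInf ⟨t₁, hne⟩ fun s hs => hs.1.1
    have ht₀1 : t₀ ≤ t₁ := csInf_le hbdd hne
    have h0in : ρ 0 ∈ Ioo lo hi := ⟨by rw [hlo]; linarith [h0.1], by rw [hhi]; linarith [h0.2]⟩
    have hmem : ρ t₀ ∈ Icc lo hi := by
      by_contra hmemc
      have ht₀pos : 0 < t₀ := by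
        rcases lt_or_eq_of_le ht₀0 with h | h
        · exact h
        · exfalso; exact hmemc (by rw [← h]; exact Ioo_subset_Icc_self h0in)
      have hopen : ∀ᶠ s in nhds t₀, ρ s ∉ Icc lo hi :=
        hc.continuousAt.eventually_mem ((isOpen_compl_iff.mpr isClosed_Icc).mem_nhds hmemc)
      rw [Metric.eventually_nhds_iff] at hopen
      obtain ⟨η, hη0, hη⟩ := hopen
      set s := max (t₀ - η / 2) (t₀ / 2) with hs'
      have hst : s < t₀ := max_lt (by linarith) (by linarith)
      have hs0 : 0 ≤ s := le_trans (by linarith) (le_max_right _ _)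
      have hsd : dist s t₀ < η := by
        rw [Real.dist_eq, abs_lt]
        constructor
        · have := le_max_left (t₀ - η / 2) (t₀ / 2); linarith
        · linarith
      have hsS : s ∈ S := ⟨⟨hs0, by linarith⟩, hη hsd⟩
      exact absurd (csInf_le hbdd hsS) (not_le.mpr hst)
    have hIoo : ρ t₀ ∉ Ioo lo hi := by
      intro hIn
      have hopen : ∀ᶠ s in nhds t₀, ρ s ∈ Ioo lo hi :=
        hc.continuousAt.eventually_mem (isOpen_Ioo.mem_nhds hIn)
      rw [Metric.eventually_nhds_iff] at hopen
      obtain ⟨η, hη0, hη⟩ := hopen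
      obtain ⟨s, hsS, hslt⟩ := (csInf_lt_iff hbdd ⟨t₁, hne⟩).mp
        (show sInf S < t₀ + η by rw [← ht₀]; linarith)
      have hst₀ : t₀ ≤ s := csInf_le hbdd hsS
      exact hsS.2 (Ioo_subset_Icc_self (hη (by rw [Real.dist_eq, abs_lt]; constructor <;> linarith)))
    have hbound : ρ t₀ = lo ∨ ρ t₀ = hi := by
      rcases hmem with ⟨h1, h2⟩
      rcases eq_or_lt_of_le h1 with h | h
      · exact Or.inl h.symm
      rcases eq_or_lt_of_le h2 with h' | h'
      · exact Or.inr h'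
      · exact absurd ⟨h, h'⟩ hIoo
    obtain ⟨hM0, hMρ⟩ := hM t₀ ht₀0
    have hodet := hode t₀ ht₀0
    have hev : ∀ᶠ s in nhdsWithin t₀ (Ioi t₀), ρ s ∈ Ioo lo hi := by
      rcases hbound with h | h
      · -- lower boundary: derivative is positive
        have hρpos : 0 < ρ t₀ := by rw [h, hlo]; linarith
        have hκρ : κ * ρ t₀ = (r - m_inf) - κ * δ := by
          rw [h, hlo, hρm]; field_simp
        have h5 : r - κ * ρ t₀ = m_inf + κ * δ := by linarith
        rw [h5] at hodet
        have hεd : 0 < ε * deriv ρ t₀ := by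
          nlinarith [mul_pos (mul_pos hκ hδ0) hρpos]
        have hd : 0 < deriv ρ t₀ := by
          by_contra hle; push_neg at hle
          nlinarith [mul_nonpos_of_nonneg_of_nonpos hε.le hle]
        have h1 := evRight_gt (hdiff t₀) hd
        have h2 : ∀ᶠ s in nhdsWithin t₀ (Ioi t₀), ρ s < hi :=
          (hc.continuousAt.eventually_lt_const (by rw [h]; exact hlohi)).filter_mono
            nhdsWithin_le_nhds
        filter_upwards [h1, h2] with s hs1 hs2
        exact ⟨by rw [h] at hs1; exact hs1, hs2⟩
      · -- upper boundary: derivative is negative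
        have hρpos : 0 < ρ t₀ := by
          rw [h, hhi]; have : 0 < ρp := lt_of_lt_of_le hρm_pos hρmp; linarith
        have hκρ : κ * ρ t₀ = r + κ * δ := by
          rw [h, hhi, hρp]; field_simp
        have h5 : r - κ * ρ t₀ = -(κ * δ) := by linarith
        rw [h5] at hodet
        have hεd : ε * deriv ρ t₀ < 0 := by
          nlinarith [mul_pos (mul_pos hκ hδ0) hρpos]
        have hd : deriv ρ t₀ < 0 := by
          by_contra hle; push_neg at hle
          nlinarith [mul_nonneg hε.le hle]
        have h1 := evRight_lt (hdiff t₀) hd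
        have h2 : ∀ᶠ s in nhdsWithin t₀ (Ioi t₀), lo < ρ s :=
          (hc.continuousAt.eventually_const_lt (by rw [h]; exact hlohi)).filter_mono
            nhdsWithin_le_nhds
        filter_upwards [h1, h2] with s hs1 hs2
        exact ⟨hs2, by rw [h] at hs1; exact hs1⟩
    obtain ⟨u, hu, husub⟩ := mem_nhdsGT_iff_exists_Ioo_subset.mp hev
    have ht₀S : t₀ ∉ S := fun hmem' => hmem'.2 hmem
    have hle : u ≤ t₀ := by
      rw [ht₀]
      apply le_csInf ⟨t₁, hne⟩
      intro s hs
      by_contra hlt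
      push_neg at hlt
      have hst₀ : t₀ ≤ s := csInf_le hbdd hs
      have hst₀' : t₀ < s := lt_of_le_of_ne hst₀ fun hEq => ht₀S (hEq ▸ hs)
      exact hs.2 (Ioo_subset_Icc_self (husub ⟨hst₀', hlt⟩))
    exact absurd hu (not_lt.mpr hle)
  intro t ht
  constructor
  · by_contra hcon
    push_neg at hcon
    have hδ0 : 0 < min ((ρm - ρ t) / 2) (ρm / 2) := lt_min (by linarith) (by linarith)
    have hδρ : min ((ρm - ρ t) / 2) (ρm / 2) < ρm :=
      lt_of_le_of_lt (min_le_right _ _) (by linarith)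
    have hk := (key _ hδ0 hδρ t ht).1
    have h1 : min ((ρm - ρ t) / 2) (ρm / 2) ≤ (ρm - ρ t) / 2 := min_le_left _ _
    linarith
  · by_contra hcon
    push_neg at hcon
    have hρp_pos : 0 < ρp := lt_of_lt_of_le hρm_pos hρmp
    have hδ0 : 0 < min ((ρ t - ρp) / 2) (ρm / 2) := lt_min (by linarith) (by linarith)
    have hδρ : min ((ρ t - ρp) / 2) (ρm / 2) < ρm :=
      lt_of_le_of_lt (min_le_right _ _) (by linarith)
    have hk := (key _ hδ0 hδρ t ht).2
    have h1 : min ((ρ t - ρp) / 2) (ρm / 2) ≤ (ρ t - ρp) / 2 := min_le_left _ _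
    linarith
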